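/- For any Runge–Kutta tableau with invertible Butcher matrix A and any real Δt > 0, if M is symmetric positive definite and K symmetric positive semidefinite, and all eigenvalues of A have positive real part, then the block matrix I ⊗ M + Δt A ⊗ K is invertible. -/

import Mathlib

open Matrix Kronecker
open scoped MatrixOrder

/-- If all eigenvalues of `A` (over `ℂ`) have positive real part and `0 ≤ c`, then
`1 + c • A` has nonzero determinant over `ℝ`. -/
lemma aux_det_one_add_smul_ne_zero {s : ℕ} (A : Matrix (Fin s) (Fin s) ℝ)
    (hA : ∀ μ ∈ spectrum ℂ (A.map (Complex.ofReal ·)), 0 < μ.re)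
    {c : ℝ} (hc : 0 ≤ c) : ((1 : Matrix (Fin s) (Fin s) ℝ) + c • A).det ≠ 0 := by
  rcases eq_or_lt_of_le hc with h0 | h0
  · simp [← h0]
  intro hdet
  set Ac : Matrix (Fin s) (Fin s) ℂ := A.map (Complex.ofReal ·) with hAc
  have hmap : ((1 : Matrix (Fin s) (Fin s) ℝ) + c • A).map (Complex.ofReal ·)
      = (1 : Matrix (Fin s) (Fin s) ℂ) + (c : ℂ) • Ac := by
    ext i j
    by_cases h : i = j <;>
      simp [h, Matrix.map_apply, Matrix.one_apply, Matrix.add_apply, hAc]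
  have hdetC : ((1 : Matrix (Fin s) (Fin s) ℂ) + (c : ℂ) • Ac).det = 0 := by
    have h : ((1 : Matrix (Fin s) (Fin s) ℂ) + (c : ℂ) • Ac).det
        = Complex.ofRealHom (((1 : Matrix (Fin s) (Fin s) ℝ) + c • A).det) := by
      rw [← hmap]
      exact (RingHom.map_det Complex.ofRealHom _).symm
    rw [h, hdet, map_zero]
  have hmem : ((-(1/c) : ℝ) : ℂ) ∈ spectrum ℂ Ac := by
    rw [spectrum.mem_iff]
    intro hu
    rw [Matrix.isUnit_iff_isUnit_det] at hu
    have hkey : algebraMap ℂ (Matrix (Fin s) (Fin s) ℂ) ((-(1/c) : ℝ) : ℂ) - Ac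
        = ((-(1/c) : ℝ) : ℂ) • ((1 : Matrix (Fin s) (Fin s) ℂ) + (c : ℂ) • Ac) := by
      rw [smul_add, smul_smul, Algebra.algebraMap_eq_smul_one]
      have : ((-(1/c) : ℝ) : ℂ) * (c : ℂ) = -1 := by
        have hcne : (c : ℂ) ≠ 0 := by exact_mod_cast ne_of_gt h0
        push_cast
        field_simp
      rw [this]
      simp [sub_eq_add_neg]
    rw [hkey] at hu
    rw [Matrix.det_smul, hdetC, mul_zero] at hu
    exact hu.ne_zero rfl
  have := hA _ hmem
  have h1 : ((-(1/c) : ℝ) : ℂ).re = -(1/c) := by simp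
  rw [h1] at this
  have : (0:ℝ) < -(1/c) := this
  have hpos : (0:ℝ) < 1/c := by positivity
  linarith

/-- If all eigenvalues of the Butcher matrix `A` have positive real part, `M` is SPD,
`K` is symmetric PSD, and `Δt > 0`, then `I ⊗ M + Δt A ⊗ K` is invertible. -/
theorem implicit_rk_block_invertible {s n : ℕ}
    (A : Matrix (Fin s) (Fin s) ℝ)
    (hA : ∀ μ ∈ spectrum ℂ (A.map (Complex.ofReal ·)), 0 < μ.re)
    (M K : Matrix (Fin n) (Fin n) ℝ) (hM : M.PosDef) (hK : K.PosSemidef)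
    (Δt : ℝ) (hΔt : 0 < Δt) :
    IsUnit ((1 : Matrix (Fin s) (Fin s) ℝ) ⊗ₖ M + Δt • (A ⊗ₖ K)) := by
  classical
  -- square root of M
  set S : Matrix (Fin n) (Fin n) ℝ := CFC.sqrt M with hS
  have hSps : S.PosSemidef := (CFC.sqrt_nonneg M).posSemidef
  have hSS : S * S = M := CFC.sqrt_mul_sqrt_self M hM.posSemidef.nonneg
  have hdetS : IsUnit S.det := by
    have hdM : 0 < M.det := hM.det_pos
    rw [← hSS, Matrix.det_mul] at hdM
    have : S.det ≠ 0 := by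
      intro h; rw [h] at hdM; simp at hdM
    exact this.isUnit
  have hSinv1 : S * S⁻¹ = 1 := Matrix.mul_nonsing_inv S hdetS
  have hSinv2 : S⁻¹ * S = 1 := Matrix.nonsing_inv_mul S hdetS
  have hSHerm : S.IsHermitian := hSps.isHermitian
  have hSinvHerm : (S⁻¹).IsHermitian := hSHerm.inv
  -- K' = S⁻¹ K S⁻¹ is PSD
  set K' : Matrix (Fin n) (Fin n) ℝ := S⁻¹ * K * S⁻¹ with hK'def
  have hK' : K'.PosSemidef := by
    have := hK.conjTranspose_mul_mul_same (B := S⁻¹)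
    rwa [hSinvHerm.eq] at this
  -- spectral theorem for K'
  set U : Matrix (Fin n) (Fin n) ℝ := (hK'.isHermitian.eigenvectorUnitary : Matrix (Fin n) (Fin n) ℝ) with hU
  set d : Fin n → ℝ := RCLike.ofReal ∘ hK'.isHermitian.eigenvalues with hd
  have hspec : K' = U * Matrix.diagonal d * star U := hK'.isHermitian.spectral_theorem
  have hUstar1 : U * star U = 1 :=
    Matrix.mem_unitaryGroup_iff.mp hK'.isHermitian.eigenvectorUnitary.2
  have hUstar2 : star U * U = 1 :=
    Matrix.mem_unitaryGroup_iff'.mp hK'.isHermitian.eigenvectorUnitary.2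
  have hdnn : ∀ k, 0 ≤ d k := by
    intro k
    have := hK'.eigenvalues_nonneg k
    simpa [hd, RCLike.ofReal_real_eq_id] using this
  -- the diagonal middle matrix
  set E : Matrix (Fin s × Fin n) (Fin s × Fin n) ℝ :=
    (1 : Matrix (Fin s) (Fin s) ℝ) ⊗ₖ (1 : Matrix (Fin n) (Fin n) ℝ)
      + Δt • (A ⊗ₖ Matrix.diagonal d) with hE
  -- E is block triangular in the second index
  have hBT : E.BlockTriangular Prod.snd := by
    intro p q hpq
    have hne : p.2 ≠ q.2 := ne_of_gt hpq
    have hpq' : p ≠ q := fun h => hne (congrArg Prod.snd h)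
    simp [hE, Matrix.add_apply, Matrix.kroneckerMap_apply, Matrix.one_apply_ne hpq',
      Matrix.diagonal_apply_ne _ hne, Matrix.smul_apply]
  -- determinant of each diagonal block
  have hblock : ∀ k : Fin n,
      (E.toSquareBlock Prod.snd k).det
        = ((1 : Matrix (Fin s) (Fin s) ℝ) + (Δt * d k) • A).det := by
    intro k
    let e : {p : Fin s × Fin n // p.snd = k} ≃ Fin s :=
      { toFun := fun p => p.1.1
        invFun := fun i => ⟨(i, k), rfl⟩
        left_inv := by rintro ⟨⟨i, k'⟩, rfl⟩; rfl
        right_inv := fun i => rfl }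
    have heq : E.toSquareBlock Prod.snd k
        = ((1 : Matrix (Fin s) (Fin s) ℝ) + (Δt * d k) • A).submatrix e e := by
      ext p q
      rcases p with ⟨⟨i, k1⟩, hk1⟩
      cases hk1
      rcases q with ⟨⟨j, k2⟩, hk2⟩
      cases hk2
      by_cases h : i = j <;>
        simp [Matrix.toSquareBlock_def, hE, Matrix.add_apply, Matrix.smul_apply,
          Matrix.kroneckerMap_apply, Matrix.diagonal_apply_eq, Matrix.submatrix_apply,
          Matrix.one_apply, Subtype.ext_iff, Prod.ext_iff, h, e] <;> ring
    rw [heq, Matrix.det_submatrix_equiv_self]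
  -- determinant of E is nonzero
  have hEdet : E.det ≠ 0 := by
    rw [hBT.det_fintype]
    apply Finset.prod_ne_zero_iff.mpr
    intro k _
    rw [hblock k]
    exact aux_det_one_add_smul_ne_zero A hA (mul_nonneg hΔt.le (hdnn k))
  have hEunit : IsUnit E := by
    rw [Matrix.isUnit_iff_isUnit_det]
    exact hEdet.isUnit
  -- conjugating matrices
  set P : Matrix (Fin n) (Fin n) ℝ := S * U with hP
  set Q : Matrix (Fin n) (Fin n) ℝ := star U * S with hQ
  have hPQ : P * Q = M := by
    rw [hP, hQ]
    calc S * U * (star U * S) = S * (U * star U) * S := by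
          simp only [Matrix.mul_assoc]
      _ = M := by rw [hUstar1, Matrix.mul_one, hSS]
  have hPDQ : P * Matrix.diagonal d * Q = K := by
    have h1 : P * Matrix.diagonal d * Q = S * (U * Matrix.diagonal d * star U) * S := by
      rw [hP, hQ]; simp only [Matrix.mul_assoc]
    rw [h1, ← hspec, hK'def]
    calc S * (S⁻¹ * K * S⁻¹) * S = (S * S⁻¹) * K * (S⁻¹ * S) := by
          simp only [Matrix.mul_assoc]
      _ = K := by rw [hSinv1, hSinv2, Matrix.one_mul, Matrix.mul_one]
  -- the key factorization
  have hfact : (1 : Matrix (Fin s) (Fin s) ℝ) ⊗ₖ M + Δt • (A ⊗ₖ K)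
      = ((1 : Matrix (Fin s) (Fin s) ℝ) ⊗ₖ P) * E * ((1 : Matrix (Fin s) (Fin s) ℝ) ⊗ₖ Q) := by
    rw [hE]
    rw [Matrix.mul_add, Matrix.add_mul]
    congr 1
    · simp only [← Matrix.mul_kronecker_mul, Matrix.mul_one, Matrix.one_mul, hPQ]
    · rw [mul_smul_comm, smul_mul_assoc]
      congr 1
      simp only [← Matrix.mul_kronecker_mul, Matrix.mul_one, Matrix.one_mul, hPDQ]
  -- units
  have hUdet : IsUnit U.det := by
    apply IsUnit.of_mul_eq_one (star U).det
    rw [← Matrix.det_mul, hUstar1, Matrix.det_one]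
  have hUunit : IsUnit U := (Matrix.isUnit_iff_isUnit_det _).mpr hUdet
  have hUstarUnit : IsUnit (star U) := by
    rw [Matrix.isUnit_iff_isUnit_det]
    apply IsUnit.of_mul_eq_one U.det
    rw [← Matrix.det_mul, hUstar2, Matrix.det_one]
  have hSunit : IsUnit S := (Matrix.isUnit_iff_isUnit_det _).mpr hdetS
  have hPunit : IsUnit P := hSunit.mul hUunit
  have hQunit : IsUnit Q := hUstarUnit.mul hSunit
  have hkronP : IsUnit ((1 : Matrix (Fin s) (Fin s) ℝ) ⊗ₖ P) := by
    rw [Matrix.isUnit_iff_isUnit_det, Matrix.det_kronecker]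
    simp only [Matrix.det_one, one_pow, one_mul]
    exact ((Matrix.isUnit_iff_isUnit_det _).mp hPunit).pow _
  have hkronQ : IsUnit ((1 : Matrix (Fin s) (Fin s) ℝ) ⊗ₖ Q) := by
    rw [Matrix.isUnit_iff_isUnit_det, Matrix.det_kronecker]
    simp only [Matrix.det_one, one_pow, one_mul]
    exact ((Matrix.isUnit_iff_isUnit_det _).mp hQunit).pow _
  rw [hfact]
  exact (hkronP.mul hEunit).mul hkronQ
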